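/- Let f be a bn-independent broadcast on a graph G with |V_f^+| ≥ 2, where V_f^+ = {v : f(v) > 0}. Then f is maximal bn-independent if and only if each component of G − U_f^E contains at least two broadcasting vertices, where U_f^E is the set of edges not covered by f. -/

import Mathlib

open SimpleGraph Finset
open scoped Classical

noncomputable section

/-- Eccentricity of a vertex. -/
def gecc {V : Type*} (G : SimpleGraph V) [Fintype V] (v : V) : ℕ :=
  Finset.univ.sup fun u => G.dist v u

/-- A broadcast: `f v ≤ e(v)` for all `v`. -/
def IsBroadcast {V : Type*} (G : SimpleGraph V) [Fintype V] (f : V → ℕ) : Prop :=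
  ∀ v, f v ≤ gecc G v

/-- `u` hears `f` from `v`. -/
def Hears {V : Type*} (G : SimpleGraph V) (f : V → ℕ) (u v : V) : Prop :=
  0 < f v ∧ G.dist u v ≤ f v

/-- Boundary independent broadcast: a vertex hearing two or more broadcasting
vertices lies in the boundary of each. -/
def BnIndep {V : Type*} (G : SimpleGraph V) [Fintype V] (f : V → ℕ) : Prop :=
  IsBroadcast G f ∧
    ∀ w v₁ v₂, v₁ ≠ v₂ → Hears G f w v₁ → Hears G f w v₂ → G.dist w v₁ = f v₁

/-- Weight of a broadcast. -/
def bweight {V : Type*} [Fintype V] (f : V → ℕ) : ℕ := ∑ v, f v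

/-- The boundary independence number. -/
def alphaBn {V : Type*} (G : SimpleGraph V) [Fintype V] : ℕ :=
  sSup {w | ∃ f, BnIndep G f ∧ bweight f = w}

/-- Set of branch vertices (degree at least 3). -/
def branchSet {V : Type*} (G : SimpleGraph V) [Fintype V] : Finset V :=
  Finset.univ.filter fun v => 3 ≤ G.degree v

/-- `l` is a leaf joined to `v` by an endpath (all internal vertices of degree 2). -/
def IsEndpathTo {V : Type*} (G : SimpleGraph V) [Fintype V] (v l : V) : Prop :=
  G.degree l = 1 ∧ ∃ p : G.Walk v l, p.IsPath ∧
    ∀ u ∈ p.support, u ≠ v → u ≠ l → G.degree u = 2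

/-- Leaf set `L(v)` of a vertex `v`. -/
def leafSet {V : Type*} (G : SimpleGraph V) [Fintype V] (v : V) : Finset V :=
  Finset.univ.filter fun l => IsEndpathTo G v l

/-- `R(T)`: branch vertices with at most one leaf in their leaf set. -/
def rset {V : Type*} (G : SimpleGraph V) [Fintype V] : Finset V :=
  (branchSet G).filter fun v => (leafSet G v).card ≤ 1

/-- Edge `uv` is covered by broadcasting vertex `x`. -/
def Covers {V : Type*} (G : SimpleGraph V) (f : V → ℕ) (x u v : V) : Prop :=
  0 < f x ∧ G.Adj u v ∧ G.dist u x ≤ f x ∧ G.dist v x ≤ f x ∧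
    (G.dist u x < f x ∨ G.dist v x < f x)

/-- The graph `G - U_f^E` obtained by deleting all `f`-uncovered edges. -/
def coveredSubgraph {V : Type*} (G : SimpleGraph V) (f : V → ℕ) : SimpleGraph V where
  Adj u v := G.Adj u v ∧ ∃ x, Covers G f x u v
  symm := ⟨by
    rintro u v ⟨h, x, h1, h2, h3, h4, h5⟩
    exact ⟨h.symm, x, h1, h2.symm, h4, h3, h5.symm⟩⟩
  loopless := ⟨by rintro u ⟨h, -⟩; exact G.loopless.irrefl u h⟩

/-- `f` is a maximal bn-independent broadcast. -/
def MaximalBn {V : Type*} (G : SimpleGraph V) [Fintype V] (f : V → ℕ) : Prop :=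
  BnIndep G f ∧ ∀ g, BnIndep G g → (∀ v, f v ≤ g v) → g = f

/-- The `f`-private boundary of `v`: vertices of `N_f(v)` not dominated once the
broadcast strength of `v` is lowered by one. -/
def privBoundary {V : Type*} (G : SimpleGraph V) (f : V → ℕ) (v : V) : Set V :=
  {u | G.dist u v ≤ f v ∧ ∀ x, ¬ Hears G (Function.update f v (f v - 1)) u x}

/-- The branch representation: branch vertices adjacent iff the path between them
contains no other branch vertex. -/
def branchRep {V : Type*} (G : SimpleGraph V) [Fintype V] : SimpleGraph V where
  Adj b₁ b₂ := b₁ ≠ b₂ ∧ 3 ≤ G.degree b₁ ∧ 3 ≤ G.degree b₂ ∧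
    ∀ p : G.Walk b₁ b₂, p.IsPath → ∀ u ∈ p.support, 3 ≤ G.degree u → u = b₁ ∨ u = b₂
  symm := ⟨by
    rintro a b ⟨hab, ha, hb, h⟩
    refine ⟨hab.symm, hb, ha, fun p hp u hu hdeg => ?_⟩
    have hu' : u ∈ p.reverse.support := by
      rw [SimpleGraph.Walk.support_reverse]; exact List.mem_reverse.mpr hu
    exact (h p.reverse hp.reverse u hu' hdeg).symm⟩
  loopless := ⟨by rintro v ⟨h, -⟩; exact h rfl⟩

/-- Hearing independent broadcast. -/
def HIndep {V : Type*} (G : SimpleGraph V) [Fintype V] (f : V → ℕ) : Prop :=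
  IsBroadcast G f ∧ ∀ u v, u ≠ v → 0 < f u → 0 < f v → f v < G.dist u v

/-- The hearing independence number. -/
def alphaH {V : Type*} (G : SimpleGraph V) [Fintype V] : ℕ :=
  sSup {w | ∃ f, HIndep G f ∧ bweight f = w}

/-- Diameter. -/
def gdiam {V : Type*} (G : SimpleGraph V) [Fintype V] : ℕ :=
  Finset.univ.sup fun v => gecc G v

section AuxLemmas

variable {V : Type*} [Fintype V] {G : SimpleGraph V}

lemma dist_le_gecc (G : SimpleGraph V) (u v : V) : G.dist u v ≤ gecc G u :=
  Finset.le_sup (Finset.mem_univ v)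

lemma exists_adj_dist (hG : G.Connected) {z v : V} {m : ℕ} (h : G.dist z v = m + 1) :
    ∃ z', G.Adj z z' ∧ G.dist z' v = m := by
  obtain ⟨p, hp⟩ := (hG z v).exists_walk_length_eq_dist
  cases p with
  | nil => simp at h
  | @cons _ b _ hadj q =>
    refine ⟨b, hadj, le_antisymm ?_ ?_⟩
    · have := G.dist_le q
      simp [SimpleGraph.Walk.length_cons, h] at hp
      omega
    · have ht := hG.dist_triangle (u := z) (v := b) (w := v)
      have h1 : G.dist z b = 1 := SimpleGraph.dist_eq_one_iff_adj.mpr hadj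
      omega

lemma hear_reachable (hG : G.Connected) {f : V → ℕ} {x : V} (hx : 0 < f x) :
    ∀ (n : ℕ) {w : V}, G.dist w x = n → n ≤ f x → (coveredSubgraph G f).Reachable w x := by
  intro n
  induction n with
  | zero =>
    intro w h _
    rw [hG.dist_eq_zero_iff] at h
    subst h; exact SimpleGraph.Reachable.refl _
  | succ m ih =>
    intro w h hle
    obtain ⟨w', hadj, hdist⟩ := exists_adj_dist hG h
    have hH : (coveredSubgraph G f).Adj w w' :=
      ⟨hadj, x, hx, hadj, by omega, by omega, Or.inr (by omega)⟩
    exact hH.reachable.trans (ih hdist (by omega))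

lemma ball_closed (f : V → ℕ) {v : V}
    (hno : ∀ z y, y ≠ v → 0 < f y → G.dist z v ≤ f v → f y < G.dist z y) :
    ∀ {a b : V}, (coveredSubgraph G f).Walk a b → G.dist a v ≤ f v → G.dist b v ≤ f v := by
  intro a b p
  induction p with
  | nil => exact id
  | @cons a c b h q ih =>
    intro ha
    apply ih
    obtain ⟨hadj, x, hfx, _, hux, hwx, _⟩ := h
    by_cases hxv : x = v
    · subst hxv; exact hwx
    · exact absurd hux (not_le.mpr (hno a x hxv hfx ha))

lemma maximal_of_cond (hG : G.Connected) {f : V → ℕ} (hf : BnIndep G f)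
    (hi : ∀ w, ∃ x, 0 < f x ∧ G.dist w x ≤ f x)
    (hii : ∀ v, 0 < f v →
      ∃ w y, y ≠ v ∧ 0 < f y ∧ G.dist w v ≤ f v ∧ G.dist w y ≤ f y) :
    MaximalBn G f := by
  refine ⟨hf, fun g hg hle => funext fun v => ?_⟩
  by_contra hne
  have hlt : f v < g v := lt_of_le_of_ne (hle v) (Ne.symm hne)
  by_cases hv : 0 < f v
  · obtain ⟨w, y, hyv, hy, hwv, hwy⟩ := hii v hv
    have h1 : G.dist w v = f v := hf.2 w v y (Ne.symm hyv) ⟨hv, hwv⟩ ⟨hy, hwy⟩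
    have h2' : G.dist w v = g v := hg.2 w v y (Ne.symm hyv)
      ⟨by omega, by omega⟩
      ⟨lt_of_lt_of_le hy (hle y), hwy.trans (hle y)⟩
    omega
  · obtain ⟨x, hx, hvx⟩ := hi v
    have hxv : v ≠ x := fun h => by rw [← h] at hx; omega
    have hdz : G.dist v v = 0 := G.dist_self
    have : G.dist v v = g v := hg.2 v v x hxv
      ⟨by omega, by omega⟩
      ⟨lt_of_lt_of_le hx (hle x), hvx.trans (hle x)⟩
    omega

lemma cond_of_maximal (hG : G.Connected) {f : V → ℕ} (hf : BnIndep G f)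
    (h2 : 2 ≤ (Finset.univ.filter fun v => 0 < f v).card) (hmax : MaximalBn G f) :
    (∀ w, ∃ x, 0 < f x ∧ G.dist w x ≤ f x) ∧
    (∀ v, 0 < f v →
      ∃ w y, y ≠ v ∧ 0 < f y ∧ G.dist w v ≤ f v ∧ G.dist w y ≤ f y) := by
  constructor
  · -- every vertex hears some broadcaster
    intro w
    by_contra hno
    push_neg at hno
    have hfw : f w = 0 := by
      by_contra h
      have := hno w (Nat.pos_of_ne_zero h)
      rw [G.dist_self] at this
      omega
    set S : Finset V := Finset.univ.filter fun v => 0 < f v with hS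
    have hSne : S.Nonempty := Finset.card_pos.mp (by omega)
    set k : ℕ := S.inf' hSne (fun x => G.dist w x - f x) with hk
    have hk1 : 1 ≤ k := by
      apply Finset.le_inf'
      intro x hx
      have hfx : 0 < f x := (Finset.mem_filter.mp hx).2
      have := hno x hfx
      omega
    have hkx : ∀ x, 0 < f x → f x + k ≤ G.dist w x := by
      intro x hx
      have h1 : k ≤ G.dist w x - f x :=
        Finset.inf'_le _ (Finset.mem_filter.mpr ⟨Finset.mem_univ x, hx⟩)
      have := hno x hx
      omega
    set g : V → ℕ := Function.update f w k with hgdef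
    have hgw : g w = k := Function.update_self w k f
    have hgx : ∀ x, x ≠ w → g x = f x := fun x hx => Function.update_of_ne hx k f
    have hgb : BnIndep G g := by
      constructor
      · intro v
        by_cases hvw : v = w
        · rw [hvw, hgw]
          obtain ⟨x₀, hx₀⟩ := hSne
          have hfx₀ : 0 < f x₀ := (Finset.mem_filter.mp hx₀).2
          have h1 : k ≤ G.dist w x₀ - f x₀ := Finset.inf'_le _ hx₀
          have h2' := dist_le_gecc G w x₀
          omega
        · rw [hgx v hvw]; exact hf.1 v
      · intro z v₁ v₂ hne12 hz1 hz2
        obtain ⟨hp1, hd1⟩ := hz1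
        obtain ⟨hp2, hd2⟩ := hz2
        by_cases hv1 : v₁ = w
        · rw [hv1] at hd1 ⊢
          rw [hgw] at hd1 ⊢
          have hv2 : v₂ ≠ w := fun h => hne12 (hv1.trans h.symm)
          rw [hgx v₂ hv2] at hp2 hd2
          have ht := hG.dist_triangle (u := w) (v := z) (w := v₂)
          have hge := hkx v₂ hp2
          have hc : G.dist w z = G.dist z w := G.dist_comm
          omega
        · rw [hgx v₁ hv1] at hp1 hd1
          rw [hgx v₁ hv1]
          by_cases hv2 : v₂ = w
          · rw [hv2] at hd2
            rw [hgw] at hd2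
            have ht := hG.dist_triangle (u := w) (v := z) (w := v₁)
            have hge := hkx v₁ hp1
            have hc : G.dist w z = G.dist z w := G.dist_comm
            omega
          · rw [hgx v₂ hv2] at hp2 hd2
            exact hf.2 z v₁ v₂ hne12 ⟨hp1, hd1⟩ ⟨hp2, hd2⟩
    have hgeq := hmax.2 g hgb (fun v => by
      by_cases hvw : v = w
      · subst hvw; rw [hgw, hfw]; omega
      · rw [hgx v hvw])
    have : g w = f w := by rw [hgeq]
    omega
  · -- every broadcaster shares a heard vertex with another broadcaster
    intro v hv
    by_contra hno
    push_neg at hno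
    obtain ⟨y₀, hy₀mem, hy₀v⟩ :=
      Finset.exists_mem_ne (s := Finset.univ.filter fun u => 0 < f u) (by omega) v
    have hy₀ : 0 < f y₀ := (Finset.mem_filter.mp hy₀mem).2
    have hdvy₀ : f v < G.dist v y₀ := by
      by_contra h
      push_neg at h
      have := hno y₀ y₀ hy₀v hy₀ (by rwa [G.dist_comm])
      rw [G.dist_self] at this
      omega
    set g : V → ℕ := Function.update f v (f v + 1) with hgdef
    have hgv : g v = f v + 1 := Function.update_self v (f v + 1) f
    have hgx : ∀ x, x ≠ v → g x = f x := fun x hx => Function.update_of_ne hx _ f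
    have hgb : BnIndep G g := by
      constructor
      · intro u
        by_cases huv : u = v
        · rw [huv, hgv]
          have := dist_le_gecc G v y₀
          omega
        · rw [hgx u huv]; exact hf.1 u
      · intro z v₁ v₂ hne12 hz1 hz2
        obtain ⟨hp1, hd1⟩ := hz1
        obtain ⟨hp2, hd2⟩ := hz2
        by_cases hv1 : v₁ = v
        · rw [hv1] at hd1 ⊢
          rw [hgv] at hd1 ⊢
          have hv2 : v₂ ≠ v := fun h => hne12 (hv1.trans h.symm)
          rw [hgx v₂ hv2] at hp2 hd2
          have hnb : ¬ G.dist z v ≤ f v := fun h => by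
            have := hno z v₂ hv2 hp2 h
            omega
          omega
        · rw [hgx v₁ hv1] at hp1 hd1
          rw [hgx v₁ hv1]
          by_cases hv2 : v₂ = v
          · rw [hv2] at hd2
            rw [hgv] at hd2
            -- show G.dist z v₁ = f v₁
            by_contra hlt
            have hlt' : G.dist z v₁ < f v₁ := lt_of_le_of_ne hd1 hlt
            by_cases hzb : G.dist z v ≤ f v
            · have := hno z v₁ hv1 hp1 hzb
              omega
            · have hzv : G.dist z v = f v + 1 := by omega
              obtain ⟨z', hadj, hdz'⟩ := exists_adj_dist hG hzv
              have ht := hG.dist_triangle (u := z') (v := z) (w := v₁)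
              have h1 : G.dist z' z = 1 := SimpleGraph.dist_eq_one_iff_adj.mpr hadj.symm
              have := hno z' v₁ hv1 hp1 (by omega)
              omega
          · rw [hgx v₂ hv2] at hp2 hd2
            exact hf.2 z v₁ v₂ hne12 ⟨hp1, hd1⟩ ⟨hp2, hd2⟩
    have hgeq := hmax.2 g hgb (fun u => by
      by_cases huv : u = v
      · subst huv; rw [hgv]; omega
      · rw [hgx u huv])
    have : g v = f v := by rw [hgeq]
    omega

lemma rhs_of_cond (hG : G.Connected) {f : V → ℕ}
    (hi : ∀ w, ∃ x, 0 < f x ∧ G.dist w x ≤ f x)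
    (hii : ∀ v, 0 < f v →
      ∃ w y, y ≠ v ∧ 0 < f y ∧ G.dist w v ≤ f v ∧ G.dist w y ≤ f y) :
    ∀ c : (coveredSubgraph G f).ConnectedComponent,
      ∃ u v : V, u ≠ v ∧ 0 < f u ∧ 0 < f v ∧
        (coveredSubgraph G f).connectedComponentMk u = c ∧
        (coveredSubgraph G f).connectedComponentMk v = c := by
  intro c
  obtain ⟨w, hw⟩ := c.exists_rep
  obtain ⟨x, hx, hwx⟩ := hi w
  have h1 : (coveredSubgraph G f).Reachable w x := hear_reachable hG hx _ rfl hwx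
  obtain ⟨z, y, hyx, hy, hzx, hzy⟩ := hii x hx
  have h2 : (coveredSubgraph G f).Reachable z x := hear_reachable hG hx _ rfl hzx
  have h3 : (coveredSubgraph G f).Reachable z y := hear_reachable hG hy _ rfl hzy
  refine ⟨x, y, Ne.symm hyx, hx, hy, ?_, ?_⟩
  · rw [← hw]
    exact SimpleGraph.ConnectedComponent.eq.mpr h1.symm
  · rw [← hw]
    exact SimpleGraph.ConnectedComponent.eq.mpr ((h3.symm.trans h2).trans h1.symm)

lemma cond_of_rhs (hG : G.Connected) {f : V → ℕ}
    (hrhs : ∀ c : (coveredSubgraph G f).ConnectedComponent,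
      ∃ u v : V, u ≠ v ∧ 0 < f u ∧ 0 < f v ∧
        (coveredSubgraph G f).connectedComponentMk u = c ∧
        (coveredSubgraph G f).connectedComponentMk v = c) :
    (∀ w, ∃ x, 0 < f x ∧ G.dist w x ≤ f x) ∧
    (∀ v, 0 < f v →
      ∃ w y, y ≠ v ∧ 0 < f y ∧ G.dist w v ≤ f v ∧ G.dist w y ≤ f y) := by
  constructor
  · intro w
    by_contra hno
    push_neg at hno
    obtain ⟨u, v, huv, hu, hv, hcu, hcv⟩ :=
      hrhs ((coveredSubgraph G f).connectedComponentMk w)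
    have hfw : f w = 0 := by
      by_contra h
      have := hno w (Nat.pos_of_ne_zero h)
      rw [G.dist_self] at this
      omega
    have hwu : w ≠ u := fun h => by rw [← h] at hu; omega
    have hreach : (coveredSubgraph G f).Reachable w u :=
      (SimpleGraph.ConnectedComponent.eq.mp hcu).symm
    obtain ⟨p⟩ := hreach
    cases p with
    | nil => exact hwu rfl
    | cons h q =>
      obtain ⟨_, x, hx, _, hdwx, _⟩ := h
      have := hno x hx
      omega
  · intro v hv
    by_contra hno
    push_neg at hno
    obtain ⟨u₁, u₂, h12, h1, h2', hc1, hc2⟩ :=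
      hrhs ((coveredSubgraph G f).connectedComponentMk v)
    have hexy : ∃ y, y ≠ v ∧ 0 < f y ∧
        (coveredSubgraph G f).connectedComponentMk y =
          (coveredSubgraph G f).connectedComponentMk v := by
      by_cases hu1 : u₁ = v
      · exact ⟨u₂, fun h => h12 (hu1.trans h.symm), h2', hc2⟩
      · exact ⟨u₁, hu1, h1, hc1⟩
    obtain ⟨y, hyv, hy, hcy⟩ := hexy
    have hreach : (coveredSubgraph G f).Reachable v y :=
      (SimpleGraph.ConnectedComponent.eq.mp hcy).symm
    obtain ⟨p⟩ := hreach
    have hyball : G.dist y v ≤ f v :=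
      ball_closed f hno p (by rw [G.dist_self]; omega)
    have := hno y y hyv hy hyball
    rw [G.dist_self] at this
    omega

end AuxLemmas

/-- A bn-independent broadcast with at least two broadcasting vertices is maximal
bn-independent iff each component of `G - U_f^E` contains at least two broadcasting
vertices. -/
theorem stmt1 {V : Type*} [Fintype V] (G : SimpleGraph V) (hG : G.Connected)
    (f : V → ℕ) (hf : BnIndep G f)
    (h2 : 2 ≤ (Finset.univ.filter fun v => 0 < f v).card) :
    MaximalBn G f ↔
      ∀ c : (coveredSubgraph G f).ConnectedComponent,
        ∃ u v : V, u ≠ v ∧ 0 < f u ∧ 0 < f v ∧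
          (coveredSubgraph G f).connectedComponentMk u = c ∧
          (coveredSubgraph G f).connectedComponentMk v = c := by
  constructor
  · intro hmax
    obtain ⟨hi, hii⟩ := cond_of_maximal hG hf h2 hmax
    exact rhs_of_cond hG hi hii
  · intro hrhs
    obtain ⟨hi, hii⟩ := cond_of_rhs hG hrhs
    exact maximal_of_cond hG hf hi hii
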